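/- There is no stationary 1-dependent 3-coloring of ℤ: no probability measure μ on ℤ → Fin 3 is simultaneously stationary, 1-dependent, and a 3-coloring. -/

import Mathlib

open MeasureTheory ProbabilityTheory

/-- Configurations: colorings of `ℤ` with `q` colors, with the product σ-algebra. -/
abbrev Config (q : ℕ) : Type := ℤ → Fin q

/-- The left shift on configurations: `shift x n = x (n + 1)`. -/
def shift {q : ℕ} (x : Config q) : Config q := fun n => x (n + 1)

/-- A measure on configurations is stationary if it is invariant under the shift. -/
def IsShiftStationary {q : ℕ} (μ : Measure (Config q)) : Prop :=
  μ.map shift = μ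

/-- A measure on configurations is a (proper) `q`-coloring if almost surely adjacent
coordinates take different values. -/
def IsColoring {q : ℕ} (μ : Measure (Config q)) : Prop :=
  ∀ᵐ x ∂μ, ∀ n : ℤ, x n ≠ x (n + 1)

/-- The σ-algebra on configurations generated by the coordinates in `A ⊆ ℤ`. -/
def coordSigma (q : ℕ) (A : Set ℤ) : MeasurableSpace (Config q) :=
  ⨆ a ∈ A, MeasurableSpace.comap (fun x : Config q => x a) inferInstance

/-- A measure on configurations is `k`-dependent if the σ-algebras generated by the
coordinates in any two sets `A, B ⊆ ℤ` with `|a - b| > k` for all `a ∈ A`, `b ∈ B`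
are independent. -/
def KDependent {q : ℕ} (k : ℕ) (μ : Measure (Config q)) : Prop :=
  ∀ A B : Set ℤ, (∀ a ∈ A, ∀ b ∈ B, (k : ℤ) < |a - b|) →
    Indep (coordSigma q A) (coordSigma q B) μ

/-! ### Cylinder sets -/

def cyl (n : ℤ) (w : List (Fin 3)) : Set (Config 3) :=
  {x | ∀ i : ℕ, i < w.length → x (n + i) = w.getD i 0}

lemma cyl_nil (n : ℤ) : cyl n ([] : List (Fin 3)) = Set.univ := by
  ext x; simp [cyl]

lemma cyl_single (n : ℤ) (c : Fin 3) :
    cyl n ([c]) = (fun x : Config 3 => x n) ⁻¹' {c} := by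
  ext x
  simp only [cyl, Set.mem_setOf_eq, Set.mem_preimage, Set.mem_singleton_iff, List.length_cons,
    List.length_nil]
  constructor
  · intro h
    have := h 0 (by omega)
    simpa using this
  · intro h i hi
    interval_cases i
    simpa using h

lemma cyl_append (n : ℤ) (u v : List (Fin 3)) :
    cyl n (u ++ v) = cyl n u ∩ cyl (n + u.length) v := by
  ext x
  simp only [cyl, Set.mem_setOf_eq, Set.mem_inter_iff, List.length_append]
  constructor
  · intro h
    refine ⟨fun i hi => ?_, fun i hi => ?_⟩
    · have := h i (by omega)
      rwa [List.getD_append _ _ _ _ hi] at this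
    · have := h (u.length + i) (by omega)
      rw [List.getD_append_right _ _ _ _ (by omega)] at this
      simp only [Nat.add_sub_cancel_left] at this
      rw [← this]
      congr 1
      push_cast
      ring
  · rintro ⟨h1, h2⟩ i hi
    by_cases hc : i < u.length
    · rw [List.getD_append _ _ _ _ hc]
      exact h1 i hc
    · push_neg at hc
      rw [List.getD_append_right _ _ _ _ hc]
      have := h2 (i - u.length) (by omega)
      rw [← this]
      congr 1
      push_cast [Nat.cast_sub hc]
      ring

lemma cyl_cons (n : ℤ) (c : Fin 3) (w : List (Fin 3)) :
    cyl n (c :: w) = (fun x : Config 3 => x n) ⁻¹' {c} ∩ cyl (n + 1) w := by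
  have : (c :: w) = [c] ++ w := rfl
  rw [this, cyl_append, cyl_single]
  norm_num

lemma shift_preimage_cyl (n : ℤ) (w : List (Fin 3)) :
    shift ⁻¹' cyl n w = cyl (n + 1) w := by
  ext x
  simp only [cyl, Set.mem_preimage, Set.mem_setOf_eq, shift]
  constructor <;> intro h i hi <;> have := h i hi <;> rw [← this] <;> congr 1 <;> ring

lemma measurable_shift : Measurable (shift (q := 3)) :=
  measurable_pi_lambda _ fun n => measurable_pi_apply _

lemma measurableSet_cyl (n : ℤ) (w : List (Fin 3)) : MeasurableSet (cyl n w) := by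
  have : cyl n w = ⋂ i ∈ Finset.range w.length,
      (fun x : Config 3 => x (n + i)) ⁻¹' {w.getD i 0} := by
    ext x; simp [cyl]
  rw [this]
  exact MeasurableSet.biInter (Set.to_countable _)
    (fun i _ => (measurable_pi_apply _) (measurableSet_singleton _))

lemma measurableSet_cyl_coord (A : Set ℤ) (n : ℤ) (w : List (Fin 3))
    (h : ∀ i : ℕ, i < w.length → (n + i) ∈ A) :
    MeasurableSet[coordSigma 3 A] (cyl n w) := by
  have : cyl n w = ⋂ i ∈ Finset.range w.length,
      (fun x : Config 3 => x (n + i)) ⁻¹' {w.getD i 0} := by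
    ext x; simp [cyl]
  rw [this]
  refine MeasurableSet.biInter (Set.to_countable _) (fun i hi => ?_)
  have hle : MeasurableSpace.comap (fun x : Config 3 => x (n + i)) inferInstance ≤
      coordSigma 3 A :=
    le_iSup₂ (f := fun (a : ℤ) (_ : a ∈ A) =>
      MeasurableSpace.comap (fun x : Config 3 => x a) inferInstance) (n + i)
      (h i (Finset.mem_range.mp hi))
  exact hle _ ⟨{w.getD i 0}, measurableSet_singleton _, rfl⟩

/-! ### Measure lemmas -/

section Measure

variable (μ : Measure (Config 3)) [IsProbabilityMeasure μ]

lemma meas_cyl_shift (hstat : IsShiftStationary μ) (n : ℤ) (w : List (Fin 3)) :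
    μ (cyl n w) = μ (cyl 0 w) := by
  have key : ∀ m : ℤ, μ (cyl (m + 1) w) = μ (cyl m w) := by
    intro m
    rw [← shift_preimage_cyl, ← Measure.map_apply measurable_shift (measurableSet_cyl m w),
      hstat]
  induction n using Int.induction_on with
  | zero => rfl
  | succ k ih => rw [key k, ih]
  | pred k ih => rw [← ih, ← key (-k - 1)]; norm_num

lemma meas_split (s : Set (Config 3)) (hs : MeasurableSet s) (m : ℤ) :
    μ s = μ (s ∩ (fun x : Config 3 => x m) ⁻¹' {0})
        + μ (s ∩ (fun x : Config 3 => x m) ⁻¹' {1})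
        + μ (s ∩ (fun x : Config 3 => x m) ⁻¹' {2}) := by
  have hms : ∀ c : Fin 3, MeasurableSet (s ∩ (fun x : Config 3 => x m) ⁻¹' {c}) :=
    fun c => hs.inter ((measurable_pi_apply m) (measurableSet_singleton c))
  have hcover : s = (s ∩ (fun x : Config 3 => x m) ⁻¹' {0})
      ∪ (s ∩ (fun x : Config 3 => x m) ⁻¹' {1})
      ∪ (s ∩ (fun x : Config 3 => x m) ⁻¹' {2}) := by
    ext x
    simp only [Set.mem_union, Set.mem_inter_iff, Set.mem_preimage, Set.mem_singleton_iff]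
    have h3 : x m = 0 ∨ x m = 1 ∨ x m = 2 := by omega
    tauto
  have hd1 : Disjoint (s ∩ (fun x : Config 3 => x m) ⁻¹' {0})
      (s ∩ (fun x : Config 3 => x m) ⁻¹' {1}) := by
    rw [Set.disjoint_left]
    rintro x ⟨-, h0⟩ ⟨-, h1⟩
    simp only [Set.mem_preimage, Set.mem_singleton_iff] at h0 h1
    rw [h0] at h1; exact absurd h1 (by decide)
  have hd2 : Disjoint ((s ∩ (fun x : Config 3 => x m) ⁻¹' {0})
      ∪ (s ∩ (fun x : Config 3 => x m) ⁻¹' {1}))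
      (s ∩ (fun x : Config 3 => x m) ⁻¹' {2}) := by
    rw [Set.disjoint_left]
    rintro x (⟨-, h0⟩ | ⟨-, h0⟩) ⟨-, h2⟩ <;>
      simp only [Set.mem_preimage, Set.mem_singleton_iff] at h0 h2 <;>
      rw [h0] at h2 <;> exact absurd h2 (by decide)
  conv_lhs => rw [hcover]
  rw [measure_union hd2 (hms 2), measure_union hd1 (hms 1)]


/-- Cylinder probability as a real number. -/
noncomputable def pr (w : List (Fin 3)) : ℝ := (μ (cyl 0 w)).toReal

lemma pr_nonneg (w : List (Fin 3)) : 0 ≤ pr μ w := ENNReal.toReal_nonneg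

lemma pr_nil : pr μ ([] : List (Fin 3)) = 1 := by
  simp [pr, cyl_nil]

lemma pr_adj (hcol : IsColoring μ) (u : List (Fin 3)) (c : Fin 3) (v : List (Fin 3)) :
    pr μ (u ++ c :: c :: v) = 0 := by
  have hnull : μ {x : Config 3 | ¬ ∀ n : ℤ, x n ≠ x (n + 1)} = 0 := ae_iff.mp hcol
  have hzero : μ (cyl 0 (u ++ c :: c :: v)) = 0 := by
    refine measure_mono_null (fun x hx => ?_) hnull
    simp only [Set.mem_setOf_eq]
    push_neg
    refine ⟨(u.length : ℤ), ?_⟩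
    have h1 := hx u.length (by simp)
    have h2 := hx (u.length + 1) (by simp)
    rw [List.getD_append_right _ _ _ _ (le_refl _)] at h1
    rw [List.getD_append_right _ _ _ _ (by omega)] at h2
    simp only [Nat.sub_self] at h1
    have he : u.length + 1 - u.length = 1 := by omega
    rw [he] at h2
    simp only [List.getD_cons_zero] at h1
    have h2' : (c :: c :: v).getD 1 0 = c := rfl
    rw [h2'] at h2
    rw [show (0 : ℤ) + (u.length : ℤ) = (u.length : ℤ) by ring] at h1
    rw [show (0 : ℤ) + ((u.length + 1 : ℕ) : ℤ) = (u.length : ℤ) + 1 by push_cast; ring] at h2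
    rw [h1, h2]
  simp [pr, hzero]

lemma pr_sum_right (w : List (Fin 3)) :
    pr μ w = pr μ (w ++ [0]) + pr μ (w ++ [1]) + pr μ (w ++ [2]) := by
  have key : ∀ c : Fin 3, cyl 0 (w ++ [c]) =
      cyl 0 w ∩ (fun x : Config 3 => x ((w.length : ℤ))) ⁻¹' {c} := by
    intro c
    rw [cyl_append, cyl_single]
    norm_num
  have h := meas_split μ (cyl 0 w) (measurableSet_cyl 0 w) (w.length : ℤ)
  rw [← key 0, ← key 1, ← key 2] at h
  simp only [pr]
  rw [h, ENNReal.toReal_add, ENNReal.toReal_add] <;>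
    first
      | rfl
      | exact measure_ne_top μ _
      | exact ENNReal.add_ne_top.mpr ⟨measure_ne_top μ _, measure_ne_top μ _⟩

lemma pr_sum_left (hstat : IsShiftStationary μ) (w : List (Fin 3)) :
    pr μ w = pr μ (0 :: w) + pr μ (1 :: w) + pr μ (2 :: w) := by
  have key : ∀ c : Fin 3, cyl 0 (c :: w) =
      cyl 1 w ∩ (fun x : Config 3 => x 0) ⁻¹' {c} := by
    intro c
    rw [cyl_cons]
    norm_num [Set.inter_comm]
  have h := meas_split μ (cyl 1 w) (measurableSet_cyl 1 w) 0
  rw [← key 0, ← key 1, ← key 2, meas_cyl_shift μ hstat 1 w] at h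
  simp only [pr]
  rw [h, ENNReal.toReal_add, ENNReal.toReal_add] <;>
    first
      | rfl
      | exact measure_ne_top μ _
      | exact ENNReal.add_ne_top.mpr ⟨measure_ne_top μ _, measure_ne_top μ _⟩

lemma pr_gap (hstat : IsShiftStationary μ) (hdep : KDependent 1 μ) (u v : List (Fin 3)) :
    pr μ u * pr μ v =
      pr μ (u ++ 0 :: v) + pr μ (u ++ 1 :: v) + pr μ (u ++ 2 :: v) := by
  set L : ℤ := (u.length : ℤ) with hL
  -- independence
  have hind := hdep {a : ℤ | 0 ≤ a ∧ a < L} {b : ℤ | L + 1 ≤ b} (by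
    rintro a ⟨ha0, ha1⟩ b hb
    simp only [Set.mem_setOf_eq] at hb
    have : 1 < b - a := by omega
    calc (1 : ℤ) < b - a := this
      _ ≤ |b - a| := le_abs_self _
      _ = |a - b| := abs_sub_comm _ _)
  rw [Indep_iff] at hind
  have hmu : MeasurableSet[coordSigma 3 {a : ℤ | 0 ≤ a ∧ a < L}] (cyl 0 u) := by
    refine measurableSet_cyl_coord _ _ _ (fun i hi => ?_)
    simp only [Set.mem_setOf_eq]
    constructor <;> [omega; (rw [hL]; omega)]
  have hmv : MeasurableSet[coordSigma 3 {b : ℤ | L + 1 ≤ b}] (cyl (L + 1) v) := by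
    refine measurableSet_cyl_coord _ _ _ (fun i hi => ?_)
    simp only [Set.mem_setOf_eq]
    omega
  have hprod := hind _ _ hmu hmv
  -- decompose the intersection
  have key : ∀ c : Fin 3, cyl 0 (u ++ c :: v) =
      (cyl 0 u ∩ cyl (L + 1) v) ∩ (fun x : Config 3 => x L) ⁻¹' {c} := by
    intro c
    rw [cyl_append, cyl_cons]
    have h0 : (0 : ℤ) + (u.length : ℤ) = L := by rw [hL]; ring
    rw [h0]
    ext x
    simp only [Set.mem_inter_iff, Set.mem_preimage, Set.mem_singleton_iff]
    tauto
  have hsplit := meas_split μ (cyl 0 u ∩ cyl (L + 1) v)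
    ((measurableSet_cyl 0 u).inter (measurableSet_cyl (L + 1) v)) L
  rw [← key 0, ← key 1, ← key 2] at hsplit
  have hfinal : μ (cyl 0 u) * μ (cyl 0 v) =
      μ (cyl 0 (u ++ 0 :: v)) + μ (cyl 0 (u ++ 1 :: v)) + μ (cyl 0 (u ++ 2 :: v)) := by
    rw [← meas_cyl_shift μ hstat (L + 1) v, ← hprod, hsplit]
  simp only [pr]
  rw [← ENNReal.toReal_mul, hfinal, ENNReal.toReal_add, ENNReal.toReal_add] <;>
    first
      | rfl
      | exact measure_ne_top μ _
      | exact ENNReal.add_ne_top.mpr ⟨measure_ne_top μ _, measure_ne_top μ _⟩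

end Measure

/-- There is no stationary 1-dependent 3-coloring of `ℤ`. -/
theorem no_stationary_one_dependent_three_coloring (μ : Measure (Config 3))
    (hprob : IsProbabilityMeasure μ) (hstat : IsShiftStationary μ)
    (hdep : KDependent 1 μ) (hcol : IsColoring μ) : False := by
  set p : List (Fin 3) → ℝ := pr μ with hp
  have N : ∀ w, 0 ≤ p w := pr_nonneg μ
  have Z : ∀ u c v, p (u ++ c :: c :: v) = 0 := pr_adj μ hcol
  have SR : ∀ w, p w = p (w ++ [0]) + p (w ++ [1]) + p (w ++ [2]) := pr_sum_right μ
  have SL : ∀ w, p w = p (0 :: w) + p (1 :: w) + p (2 :: w) := pr_sum_left μ hstat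
  have G : ∀ u v, p u * p v = p (u ++ 0 :: v) + p (u ++ 1 :: v) + p (u ++ 2 :: v) :=
    pr_gap μ hstat hdep
  have P1 : p ([] : List (Fin 3)) = 1 := pr_nil μ
  -- zeros
  have z00 : p ([0, 0]) = 0 := Z ([]) 0 ([])
  have z11 : p ([1, 1]) = 0 := Z ([]) 1 ([])
  have z22 : p ([2, 2]) = 0 := Z ([]) 2 ([])
  have z001 : p ([0, 0, 1]) = 0 := Z ([]) 0 ([1])
  have z011 : p ([0, 1, 1]) = 0 := Z ([0]) 1 ([])
  have z002 : p ([0, 0, 2]) = 0 := Z ([]) 0 ([2])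
  have z022 : p ([0, 2, 2]) = 0 := Z ([0]) 2 ([])
  have z100 : p ([1, 0, 0]) = 0 := Z ([1]) 0 ([])
  have z110 : p ([1, 1, 0]) = 0 := Z ([]) 1 ([0])
  have z112 : p ([1, 1, 2]) = 0 := Z ([]) 1 ([2])
  have z122 : p ([1, 2, 2]) = 0 := Z ([1]) 2 ([])
  have z200 : p ([2, 0, 0]) = 0 := Z ([2]) 0 ([])
  have z220 : p ([2, 2, 0]) = 0 := Z ([]) 2 ([0])
  have z211 : p ([2, 1, 1]) = 0 := Z ([2]) 1 ([])
  have z221 : p ([2, 2, 1]) = 0 := Z ([]) 2 ([1])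
  have z111 : p ([1, 1, 1]) = 0 := Z ([]) 1 ([1])
  have z222 : p ([2, 2, 2]) = 0 := Z ([]) 2 ([2])
  -- single sums
  have s0 : (1 : ℝ) = p ([0]) + p ([1]) + p ([2]) := by
    have h := SL ([])
    rw [P1] at h
    exact h
  have a_r : p ([0]) = p ([0, 0]) + p ([0, 1]) + p ([0, 2]) := SR ([0])
  have b_r : p ([1]) = p ([1, 0]) + p ([1, 1]) + p ([1, 2]) := SR ([1])
  have c_r : p ([2]) = p ([2, 0]) + p ([2, 1]) + p ([2, 2]) := SR ([2])
  have a_l : p ([0]) = p ([0, 0]) + p ([1, 0]) + p ([2, 0]) := SL ([0])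
  have b_l : p ([1]) = p ([0, 1]) + p ([1, 1]) + p ([2, 1]) := SL ([1])
  have c_l : p ([2]) = p ([0, 2]) + p ([1, 2]) + p ([2, 2]) := SL ([2])
  -- triple gaps
  have g01 : p ([0]) * p ([1]) = p ([0, 0, 1]) + p ([0, 1, 1]) + p ([0, 2, 1]) := G ([0]) ([1])
  have g02 : p ([0]) * p ([2]) = p ([0, 0, 2]) + p ([0, 1, 2]) + p ([0, 2, 2]) := G ([0]) ([2])
  have g10 : p ([1]) * p ([0]) = p ([1, 0, 0]) + p ([1, 1, 0]) + p ([1, 2, 0]) := G ([1]) ([0])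
  have g12 : p ([1]) * p ([2]) = p ([1, 0, 2]) + p ([1, 1, 2]) + p ([1, 2, 2]) := G ([1]) ([2])
  have g20 : p ([2]) * p ([0]) = p ([2, 0, 0]) + p ([2, 1, 0]) + p ([2, 2, 0]) := G ([2]) ([0])
  have g21 : p ([2]) * p ([1]) = p ([2, 0, 1]) + p ([2, 1, 1]) + p ([2, 2, 1]) := G ([2]) ([1])
  have g11 : p ([1]) * p ([1]) = p ([1, 0, 1]) + p ([1, 1, 1]) + p ([1, 2, 1]) := G ([1]) ([1])
  have g22 : p ([2]) * p ([2]) = p ([2, 0, 2]) + p ([2, 1, 2]) + p ([2, 2, 2]) := G ([2]) ([2])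
  -- triple marginals
  have t01r : p ([0, 1]) = p ([0, 1, 0]) + p ([0, 1, 1]) + p ([0, 1, 2]) := SR ([0, 1])
  have t10r : p ([1, 0]) = p ([1, 0, 0]) + p ([1, 0, 1]) + p ([1, 0, 2]) := SR ([1, 0])
  have t12r : p ([1, 2]) = p ([1, 2, 0]) + p ([1, 2, 1]) + p ([1, 2, 2]) := SR ([1, 2])
  have t21r : p ([2, 1]) = p ([2, 1, 0]) + p ([2, 1, 1]) + p ([2, 1, 2]) := SR ([2, 1])
  have t02r : p ([0, 2]) = p ([0, 2, 0]) + p ([0, 2, 1]) + p ([0, 2, 2]) := SR ([0, 2])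
  have t20r : p ([2, 0]) = p ([2, 0, 0]) + p ([2, 0, 1]) + p ([2, 0, 2]) := SR ([2, 0])
  have t10l : p ([1, 0]) = p ([0, 1, 0]) + p ([1, 1, 0]) + p ([2, 1, 0]) := SL ([1, 0])
  have t20l : p ([2, 0]) = p ([0, 2, 0]) + p ([1, 2, 0]) + p ([2, 2, 0]) := SL ([2, 0])
  have t21l : p ([2, 1]) = p ([0, 2, 1]) + p ([1, 2, 1]) + p ([2, 2, 1]) := SL ([2, 1])
  have t02l : p ([0, 2]) = p ([0, 0, 2]) + p ([1, 0, 2]) + p ([2, 0, 2]) := SL ([0, 2])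
  have t12l : p ([1, 2]) = p ([0, 1, 2]) + p ([1, 1, 2]) + p ([2, 1, 2]) := SL ([1, 2])
  -- length-4/5 gaps
  have q1 : p ([0]) * p ([2, 0]) = p ([0, 0, 2, 0]) + p ([0, 1, 2, 0]) + p ([0, 2, 2, 0]) :=
    G ([0]) ([2, 0])
  have zq1a : p ([0, 0, 2, 0]) = 0 := Z ([]) 0 ([2, 0])
  have zq1b : p ([0, 2, 2, 0]) = 0 := Z ([0]) 2 ([0])
  have q2 : p ([0, 1]) * p ([0]) = p ([0, 1, 0, 0]) + p ([0, 1, 1, 0]) + p ([0, 1, 2, 0]) :=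
    G ([0, 1]) ([0])
  have zq2a : p ([0, 1, 0, 0]) = 0 := Z ([0, 1]) 0 ([])
  have zq2b : p ([0, 1, 1, 0]) = 0 := Z ([0]) 1 ([0])
  have q3 : p ([1]) * p ([0, 1]) = p ([1, 0, 0, 1]) + p ([1, 1, 0, 1]) + p ([1, 2, 0, 1]) :=
    G ([1]) ([0, 1])
  have zq3a : p ([1, 0, 0, 1]) = 0 := Z ([1]) 0 ([1])
  have zq3b : p ([1, 1, 0, 1]) = 0 := Z ([]) 1 ([0, 1])
  have q4 : p ([1, 2]) * p ([1]) = p ([1, 2, 0, 1]) + p ([1, 2, 1, 1]) + p ([1, 2, 2, 1]) :=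
    G ([1, 2]) ([1])
  have zq4a : p ([1, 2, 1, 1]) = 0 := Z ([1, 2]) 1 ([])
  have zq4b : p ([1, 2, 2, 1]) = 0 := Z ([1]) 2 ([1])
  have q5 : p ([0]) * p ([2, 1]) = p ([0, 0, 2, 1]) + p ([0, 1, 2, 1]) + p ([0, 2, 2, 1]) :=
    G ([0]) ([2, 1])
  have zq5a : p ([0, 0, 2, 1]) = 0 := Z ([]) 0 ([2, 1])
  have zq5b : p ([0, 2, 2, 1]) = 0 := Z ([0]) 2 ([1])
  have q6 : p ([0, 1]) * p ([1]) = p ([0, 1, 0, 1]) + p ([0, 1, 1, 1]) + p ([0, 1, 2, 1]) :=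
    G ([0, 1]) ([1])
  have zq6 : p ([0, 1, 1, 1]) = 0 := Z ([0]) 1 ([1])
  have q7 : p ([0, 1]) * p ([1, 0]) =
      p ([0, 1, 0, 1, 0]) + p ([0, 1, 1, 1, 0]) + p ([0, 1, 2, 1, 0]) := G ([0, 1]) ([1, 0])
  have zq7 : p ([0, 1, 1, 1, 0]) = 0 := Z ([0]) 1 ([1, 0])
  have q8 : p ([0]) * p ([2, 1, 0]) =
      p ([0, 0, 2, 1, 0]) + p ([0, 1, 2, 1, 0]) + p ([0, 2, 2, 1, 0]) := G ([0]) ([2, 1, 0])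
  have zq8a : p ([0, 0, 2, 1, 0]) = 0 := Z ([]) 0 ([2, 1, 0])
  have zq8b : p ([0, 2, 2, 1, 0]) = 0 := Z ([0]) 2 ([1, 0])
  have q9 : p ([0, 1, 0, 1]) =
      p ([0, 1, 0, 1, 0]) + p ([0, 1, 0, 1, 1]) + p ([0, 1, 0, 1, 2]) := SR ([0, 1, 0, 1])
  -- Step 1 : p [0] ≠ 0
  have ha0 : p ([0]) ≠ 0 := by
    intro h0
    have h10 : p ([1, 0]) = 0 := by
      linarith only [a_l, h0, z00, N ([2, 0]), N ([1, 0])]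
    have h102 : p ([1, 0, 2]) = 0 := by
      linarith only [t10r, h10, z100, N ([1, 0, 1]), N ([1, 0, 2])]
    have hbc : p ([1]) * p ([2]) = 0 := by
      linarith only [g12, h102, z112, z122]
    rcases mul_eq_zero.mp hbc with hb | hc
    · -- p[1] = 0, so p[2] = 1
      have hc1 : p ([2]) = 1 := by linarith only [s0, h0, hb]
      have h02 : p ([0, 2]) = 0 := by
        linarith only [a_r, h0, z00, N ([0, 1]), N ([0, 2])]
      have h202 : p ([2, 0, 2]) = 0 := by
        linarith only [t02l, h02, z002, N ([1, 0, 2]), N ([2, 0, 2])]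
      have h21 : p ([2, 1]) = 0 := by
        linarith only [b_l, hb, z11, N ([0, 1]), N ([2, 1])]
      have h212 : p ([2, 1, 2]) = 0 := by
        linarith only [t21r, h21, N ([2, 1, 0]), z211, N ([2, 1, 2])]
      have hq : (1 : ℝ) * 1 = p ([2, 0, 2]) + p ([2, 1, 2]) + p ([2, 2, 2]) := by
        rw [← hc1]; exact g22
      linarith only [hq, h202, h212, z222]
    · -- p[2] = 0, so p[1] = 1
      have hb1 : p ([1]) = 1 := by linarith only [s0, h0, hc]
      have h101 : p ([1, 0, 1]) = 0 := by
        linarith only [t10r, h10, z100, N ([1, 0, 2]), N ([1, 0, 1])]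
      have h12 : p ([1, 2]) = 0 := by
        linarith only [c_l, hc, z22, N ([0, 2]), N ([1, 2])]
      have h121 : p ([1, 2, 1]) = 0 := by
        linarith only [t12r, h12, z122, N ([1, 2, 0]), N ([1, 2, 1])]
      have hq : (1 : ℝ) * 1 = p ([1, 0, 1]) + p ([1, 1, 1]) + p ([1, 2, 1]) := by
        rw [← hb1]; exact g11
      linarith only [hq, h101, h121, z111]
  -- pair symmetries
  have e1 : p ([0, 1]) = p ([1, 0]) := by
    linarith only [t01r, z011, g02, z002, z022, t10l, z110, g20, z200, z220,
      mul_comm (p ([0])) (p ([2]))]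
  have e2 : p ([0, 2]) = p ([2, 0]) := by
    linarith only [t02r, z022, g01, z001, z011, t20l, z220, g10, z100, z110,
      mul_comm (p ([0])) (p ([1]))]
  have e3 : p ([1, 2]) = p ([2, 1]) := by
    linarith only [t12r, z122, g10, z100, z110, t21l, z221, g01, z001, z011,
      mul_comm (p ([0])) (p ([1]))]
  have e6 : p ([2, 0]) = p ([0, 1]) := by
    have h : p ([0]) * p ([2, 0]) = p ([0]) * p ([0, 1]) := by
      linarith only [q1, zq1a, zq1b, q2, zq2a, zq2b, mul_comm (p ([0, 1])) (p ([0]))]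
    exact mul_left_cancel₀ ha0 h
  have hb0 : p ([1]) ≠ 0 := by
    intro hb
    have h01 : p ([0, 1]) = 0 := by
      linarith only [b_l, hb, z11, N ([2, 1]), N ([0, 1])]
    exact ha0 (by linarith only [a_r, z00, h01, e2, e6])
  have e7 : p ([0, 1]) = p ([1, 2]) := by
    have h : p ([1]) * p ([0, 1]) = p ([1]) * p ([1, 2]) := by
      linarith only [q3, zq3a, zq3b, q4, zq4a, zq4b, mul_comm (p ([1, 2])) (p ([1]))]
    exact mul_left_cancel₀ hb0 h
  -- uniform values
  have h01v : p ([0, 1]) = 1 / 6 := by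
    linarith only [s0, a_r, z00, b_l, z11, c_l, z22, e2, e3, e6, e7]
  have hA : p ([0]) = 1 / 3 := by linarith only [a_r, z00, e2, e6, h01v]
  have hB : p ([1]) = 1 / 3 := by linarith only [b_l, z11, e3, e7, h01v]
  have hC : p ([2]) = 1 / 3 := by linarith only [s0, hA, hB]
  have h21v : p ([2, 1]) = 1 / 6 := by linarith only [e3, e7, h01v]
  have h10v : p ([1, 0]) = 1 / 6 := by linarith only [e1, h01v]
  -- p [2,1,0] = 1/9
  have h210 : p ([2, 1, 0]) = 1 / 9 := by
    have h := g20
    rw [hC, hA] at h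
    norm_num at h
    linarith only [h, z200, z220]
  -- p [0,1,2,1] = 1/18
  have h0121 : p ([0, 1, 2, 1]) = 1 / 18 := by
    have h := q5
    rw [hA, h21v] at h
    norm_num at h
    linarith only [h, zq5a, zq5b]
  -- p [0,1,0,1] = 0
  have h0101 : p ([0, 1, 0, 1]) = 0 := by
    have h := q6
    rw [h01v, hB] at h
    norm_num at h
    linarith only [h, zq6, h0121]
  -- p [0,1,0,1,0] = 0
  have h01010 : p ([0, 1, 0, 1, 0]) = 0 := by
    linarith only [q9, h0101, N ([0, 1, 0, 1, 1]), N ([0, 1, 0, 1, 2]), N ([0, 1, 0, 1, 0])]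
  -- contradiction: p [0,1,2,1,0] is both 1/36 and 1/27
  have hfinal1 : p ([0, 1, 2, 1, 0]) = 1 / 36 := by
    have h := q7
    rw [h01v, h10v] at h
    norm_num at h
    linarith only [h, zq7, h01010]
  have hfinal2 : p ([0, 1, 2, 1, 0]) = 1 / 27 := by
    have h := q8
    rw [hA, h210] at h
    norm_num at h
    linarith only [h, zq8a, zq8b]
  rw [hfinal1] at hfinal2
  norm_num at hfinal2
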